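/- Let 𝓗 be a complex Hilbert space, let U : ℝ → (𝓗 →L[ℂ] 𝓗) be such that each U(t) is unitary, U(t+s) = U(t) ∘ U(s) for all t, s, and for each ψ ∈ 𝓗 the map t ↦ U(t)ψ is continuous. Let w, Q₀ : 𝓗 →L[ℂ] 𝓗 be bounded, and let B : 𝓗 →L[ℂ] 𝓗 be a bounded operator satisfying ⟪ψ, Bφ⟫ = −∫₀^∞ ⟪w(U(s)ψ), Q₀(w(U(s)φ))⟫ ds for all ψ, φ ∈ 𝓗 (the integrand being integrable on [0,∞)). Suppose ψ ∈ 𝓗 and C ≥ 0 are such that ‖w(U(r)ψ)‖ ≤ C(1+r)^{−1} for all r ≥ 0. Then for every t ≥ 0, |⟪U(t)ψ, B(U(t)ψ)⟫| ≤ ‖Q₀‖ C² / (1+t). -/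

import Mathlib

open MeasureTheory

/-- Decay of the adaptor-operator expectation value: if
`⟪ψ, Bφ⟫ = −∫₀^∞ ⟪w U(s) ψ, Q₀ w U(s) φ⟫ ds` for a unitary group `U`, and the
pointwise weighted decay `‖w U(r) ψ‖ ≤ C(1+r)⁻¹` holds for `r ≥ 0`, then
`|⟪U(t)ψ, B U(t)ψ⟫| ≤ ‖Q₀‖ C² / (1+t)` for all `t ≥ 0`. -/
theorem adaptor_expectation_decay
    {𝓗 : Type*} [NormedAddCommGroup 𝓗] [InnerProductSpace ℂ 𝓗] [CompleteSpace 𝓗]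
    (U : ℝ → 𝓗 →L[ℂ] 𝓗)
    (hUunit : ∀ t, U t ∈ unitary (𝓗 →L[ℂ] 𝓗))
    (hUgroup : ∀ t s : ℝ, U (t + s) = (U t).comp (U s))
    (hUcont : ∀ ψ : 𝓗, Continuous fun t => U t ψ)
    (w Q₀ : 𝓗 →L[ℂ] 𝓗) (B : 𝓗 →L[ℂ] 𝓗)
    (hBint : ∀ ψ φ : 𝓗,
      IntegrableOn (fun s => (inner ℂ (w (U s ψ)) (Q₀ (w (U s φ))) : ℂ))
        (Set.Ioi (0 : ℝ)))
    (hB : ∀ ψ φ : 𝓗, (inner ℂ ψ (B φ) : ℂ)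
      = -∫ s in Set.Ioi (0 : ℝ), (inner ℂ (w (U s ψ)) (Q₀ (w (U s φ))) : ℂ))
    (ψ : 𝓗) (C : ℝ) (hC : 0 ≤ C)
    (hdecay : ∀ r : ℝ, 0 ≤ r → ‖w (U r ψ)‖ ≤ C * (1 + r)⁻¹) :
    ∀ t : ℝ, 0 ≤ t →
      ‖(inner ℂ (U t ψ) (B (U t ψ)) : ℂ)‖ ≤ ‖Q₀‖ * C ^ 2 / (1 + t) := by
  intro t ht
  have h1t : (0:ℝ) < 1 + t := by linarith
  rw [hB]
  rw [norm_neg]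
  -- the integrand
  set f : ℝ → ℂ := fun s => (inner ℂ (w (U s (U t ψ))) (Q₀ (w (U s (U t ψ)))) : ℂ) with hf
  -- dominating function
  set g : ℝ → ℝ := fun s => ‖Q₀‖ * C ^ 2 * (s + (1 + t)) ^ (-2 : ℝ) with hg
  have hgint : IntegrableOn g (Set.Ioi (0 : ℝ)) := by
    have h0 : IntegrableOn (fun x : ℝ => x ^ (-2 : ℝ)) (Set.Ioi (1 + t)) :=
      integrableOn_Ioi_rpow_of_lt (by norm_num) h1t
    have hpre : (fun x : ℝ => x + (1 + t)) ⁻¹' Set.Ioi (1 + t) = Set.Ioi 0 := by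
      ext x; simp [Set.mem_preimage, Set.mem_Ioi]
    have := (MeasurePreserving.integrableOn_comp_preimage
      (measurePreserving_add_right volume (1 + t)) (measurableEmbedding_addRight (1 + t))
      (s := Set.Ioi (1 + t)) (f := fun x : ℝ => x ^ (-2 : ℝ))).2 h0
    rw [hpre] at this
    exact this.const_mul (‖Q₀‖ * C ^ 2)
  have hbound : ∀ s ∈ Set.Ioi (0:ℝ), ‖f s‖ ≤ g s := by
    intro s hs
    have hs0 : (0:ℝ) < s := hs
    have hUst : U s (U t ψ) = U (s + t) ψ := by rw [hUgroup]; rfl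
    have hst : (0:ℝ) ≤ s + t := by linarith
    have hd := hdecay (s + t) hst
    have hd' : ‖w (U s (U t ψ))‖ ≤ C * (s + (1 + t))⁻¹ := by
      rw [hUst]
      convert hd using 3
      ring
    calc ‖f s‖ ≤ ‖w (U s (U t ψ))‖ * ‖Q₀ (w (U s (U t ψ)))‖ := norm_inner_le_norm _ _
      _ ≤ ‖w (U s (U t ψ))‖ * (‖Q₀‖ * ‖w (U s (U t ψ))‖) := by
          gcongr; exact Q₀.le_opNorm _
      _ ≤ (C * (s + (1 + t))⁻¹) * (‖Q₀‖ * (C * (s + (1 + t))⁻¹)) := by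
          gcongr <;> first | exact norm_nonneg _ | exact hd'
      _ = g s := by
          show _ = ‖Q₀‖ * C ^ 2 * (s + (1 + t)) ^ (-2 : ℝ)
          have hpos : (0:ℝ) < s + (1 + t) := by linarith
          have h2 : (s + (1 + t)) ^ (-2 : ℝ) = ((s + (1 + t))⁻¹) ^ 2 := by
            rw [show (-2:ℝ) = ((-2:ℤ):ℝ) by norm_num, Real.rpow_intCast, zpow_neg, ← inv_zpow]
            norm_num
          rw [h2]; ring
  have hnorm : ‖∫ s in Set.Ioi (0:ℝ), f s‖ ≤ ∫ s in Set.Ioi (0:ℝ), g s := by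
    refine norm_integral_le_of_norm_le hgint ?_
    rw [ae_restrict_iff' measurableSet_Ioi]
    exact Filter.Eventually.of_forall hbound
  refine hnorm.trans ?_
  -- compute the integral of g
  have hshift : ∫ s in Set.Ioi (0:ℝ), (s + (1 + t)) ^ (-2 : ℝ) = ∫ x in Set.Ioi (1 + t), x ^ (-2 : ℝ) := by
    have hpre : (fun x : ℝ => x + (1 + t)) ⁻¹' Set.Ioi (1 + t) = Set.Ioi 0 := by
      ext x; simp [Set.mem_preimage, Set.mem_Ioi]
    rw [← MeasurePreserving.setIntegral_preimage_emb
      (measurePreserving_add_right volume (1 + t)) (measurableEmbedding_addRight (1 + t))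
      (fun x : ℝ => x ^ (-2 : ℝ)) (Set.Ioi (1 + t)), hpre]
  have hval : ∫ x in Set.Ioi (1 + t), x ^ (-2 : ℝ) = (1 + t)⁻¹ := by
    rw [integral_Ioi_rpow_of_lt (by norm_num) h1t]
    norm_num [Real.rpow_neg_one]
  calc ∫ s in Set.Ioi (0:ℝ), g s
      = ‖Q₀‖ * C ^ 2 * ∫ s in Set.Ioi (0:ℝ), (s + (1 + t)) ^ (-2 : ℝ) := by
        rw [hg]; exact integral_const_mul _ _
    _ = ‖Q₀‖ * C ^ 2 * (1 + t)⁻¹ := by rw [hshift, hval]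
    _ = ‖Q₀‖ * C ^ 2 / (1 + t) := by ring
    _ ≤ ‖Q₀‖ * C ^ 2 / (1 + t) := le_refl _
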